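/- C_{max,Δ}(ρ) := log₂ min{λ : ρ ≤ λΔ(ρ)} is monotone under DIO: if Λ is a CPTP map with Λ∘Δ = Δ∘Λ, then C_{max,Δ}(Λ(ρ)) ≤ C_{max,Δ}(ρ) for every density operator ρ. -/

import Mathlib

open Matrix
open scoped ComplexOrder

/-- `E` is completely positive: `id_k ⊗ E` maps positive semidefinite matrices to
positive semidefinite matrices for every `k`. -/
def IsCP (dA dB : ℕ)
    (E : Matrix (Fin dA) (Fin dA) ℂ →ₗ[ℂ] Matrix (Fin dB) (Fin dB) ℂ) : Prop :=
  ∀ (k : ℕ) (M : Matrix (Fin k × Fin dA) (Fin k × Fin dA) ℂ), M.PosSemidef →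
    (Matrix.of fun p q => E (Matrix.of fun i j => M (p.1, i) (q.1, j)) p.2 q.2 :
      Matrix (Fin k × Fin dB) (Fin k × Fin dB) ℂ).PosSemidef

/-- `E` is trace preserving. -/
def IsTP (dA dB : ℕ)
    (E : Matrix (Fin dA) (Fin dA) ℂ →ₗ[ℂ] Matrix (Fin dB) (Fin dB) ℂ) : Prop :=
  ∀ X : Matrix (Fin dA) (Fin dA) ℂ, (E X).trace = X.trace


/-- The completely dephasing channel `Δ` (keeping only diagonal entries). -/
def deph {n : ℕ} (M : Matrix (Fin n) (Fin n) ℂ) : Matrix (Fin n) (Fin n) ℂ :=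
  Matrix.diagonal fun i => M i i

/-! ### Auxiliary lemmas -/

lemma deph_trace {n : ℕ} (M : Matrix (Fin n) (Fin n) ℂ) : (deph M).trace = M.trace := by
  simp [deph, Matrix.trace, Matrix.diag]

lemma psd_diag_nonneg {n : ℕ} {M : Matrix (Fin n) (Fin n) ℂ} (hM : M.PosSemidef) (i : Fin n) :
    0 ≤ M i i := by
  have := hM.dotProduct_mulVec_nonneg (Pi.single i 1)
  simpa [Matrix.mulVec_single, dotProduct, Pi.single_apply, apply_ite (star : ℂ → ℂ),
    Finset.sum_ite_eq'] using this

lemma psd_trace_nonneg {n : ℕ} {M : Matrix (Fin n) (Fin n) ℂ} (hM : M.PosSemidef) :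
    0 ≤ M.trace :=
  Finset.sum_nonneg fun i _ => psd_diag_nonneg hM i

lemma psd_real_smul {n : ℕ} {M : Matrix (Fin n) (Fin n) ℂ} (hM : M.PosSemidef) {c : ℝ}
    (hc : 0 ≤ c) : ((c : ℂ) • M).PosSemidef := by
  refine Matrix.PosSemidef.of_dotProduct_mulVec_nonneg ?_ ?_
  · unfold Matrix.IsHermitian
    rw [conjTranspose_smul, hM.1.eq]
    simp [Complex.star_def, Complex.conj_ofReal]
  · intro x
    rw [smul_mulVec, dotProduct_smul]
    exact mul_nonneg (by exact_mod_cast Complex.zero_le_real.mpr hc) (hM.dotProduct_mulVec_nonneg x)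

/-- The diagonal sign matrix `E_ii - E_jj`. -/
noncomputable def sgn {n : ℕ} (i j : Fin n) : Matrix (Fin n) (Fin n) ℂ :=
  Matrix.diagonal (fun k => (if k = i then 1 else 0) - (if k = j then 1 else 0))

set_option maxHeartbeats 1000000 in
lemma key_id {n : ℕ} (ρ : Matrix (Fin n) (Fin n) ℂ) :
    (n : ℂ) • deph ρ - ρ =
      (2⁻¹ : ℂ) • ∑ p : Fin n × Fin n, sgn p.1 p.2 * ρ * (sgn p.1 p.2)ᴴ := by
  ext a b
  have hterm : ∀ p : Fin n × Fin n, (sgn p.1 p.2 * ρ * (sgn p.1 p.2)ᴴ) a b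
      = ρ a b * (((if a = p.1 then (1:ℂ) else 0) - if a = p.2 then 1 else 0) *
          ((if b = p.1 then (1:ℂ) else 0) - if b = p.2 then 1 else 0)) := by
    intro p
    simp [sgn, Matrix.diagonal_conjTranspose, Matrix.mul_diagonal, Matrix.diagonal_mul,
      Pi.star_def, apply_ite (star : ℂ → ℂ)]
    ring
  have hsum : ∑ p : Fin n × Fin n, (((if a = p.1 then (1:ℂ) else 0) - if a = p.2 then 1 else 0) *
      ((if b = p.1 then (1:ℂ) else 0) - if b = p.2 then 1 else 0))
      = 2 * n * (if a = b then 1 else 0) - 2 := by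
    rw [Fintype.sum_prod_type]
    simp only [sub_mul, mul_sub, Finset.sum_sub_distrib, ite_mul, one_mul, zero_mul,
      Finset.sum_ite_eq, Finset.mem_univ, if_true, Finset.sum_const, Finset.card_univ,
      Fintype.card_fin, nsmul_eq_mul]
    rcases eq_or_ne a b with h | h
    · simp [h]; ring
    · simp [h, h.symm]; ring
  simp only [Matrix.sum_apply, hterm, ← Finset.mul_sum, hsum, Matrix.smul_apply,
    Matrix.sub_apply, deph, Matrix.diagonal_apply, smul_eq_mul]
  by_cases h : a = b <;> simp [h] <;> ring

set_option maxHeartbeats 1600000 in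
/-- For any PSD `ρ` of size `n`, `n • Δ(ρ) - ρ` is PSD. -/
lemma psd_card_smul_deph_sub {n : ℕ} {ρ : Matrix (Fin n) (Fin n) ℂ} (hρ : ρ.PosSemidef) :
    ((n : ℂ) • deph ρ - ρ).PosSemidef := by
  rw [key_id]
  have hsum : (∑ p : Fin n × Fin n, sgn p.1 p.2 * ρ * (sgn p.1 p.2)ᴴ).PosSemidef := by
    apply Finset.sum_induction _ Matrix.PosSemidef (fun _ _ ha hb => ha.add hb)
      Matrix.PosSemidef.zero
    intro p _
    exact hρ.mul_mul_conjTranspose_same _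
  have : ((2⁻¹ : ℝ) : ℂ) = (2⁻¹ : ℂ) := by norm_num
  rw [← this]
  exact psd_real_smul hsum (by norm_num)

/-- CP maps preserve positive semidefiniteness. -/
lemma cp_pos {d : ℕ} {Λ : Matrix (Fin d) (Fin d) ℂ →ₗ[ℂ] Matrix (Fin d) (Fin d) ℂ}
    (hCP : IsCP d d Λ) {N : Matrix (Fin d) (Fin d) ℂ} (hN : N.PosSemidef) :
    (Λ N).PosSemidef := by
  have h1 := hCP 1 (N.submatrix Prod.snd Prod.snd) (hN.submatrix _)
  have h2 := h1.submatrix (fun i : Fin d => (((0 : Fin 1), i) : Fin 1 × Fin d))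
  have heq : (Matrix.of fun p q =>
      Λ (Matrix.of fun i j => (N.submatrix Prod.snd Prod.snd) (p.1, i) (q.1, j)) p.2 q.2 :
      Matrix (Fin 1 × Fin d) (Fin 1 × Fin d) ℂ).submatrix
        (fun i : Fin d => (((0 : Fin 1), i) : Fin 1 × Fin d))
        (fun i : Fin d => (((0 : Fin 1), i) : Fin 1 × Fin d)) = Λ N := by
    ext i j
    simp [Matrix.submatrix, Matrix.of_apply]
    congr 1
  rwa [heq] at h2

/-- Any `lam` in the feasible set of a trace-one state is at least `1`. -/
lemma one_le_of_mem {n : ℕ} {σ : Matrix (Fin n) (Fin n) ℂ} (hσtr : σ.trace = 1) {lam : ℝ}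
    (h : ((lam : ℂ) • deph σ - σ).PosSemidef) : 1 ≤ lam := by
  have htr := psd_trace_nonneg h
  rw [Matrix.trace_sub, Matrix.trace_smul, deph_trace, hσtr, smul_eq_mul, mul_one] at htr
  have : ((lam : ℂ) - 1) = ((lam - 1 : ℝ) : ℂ) := by push_cast; ring
  rw [this, Complex.zero_le_real] at htr
  linarith

/-- `C_{max,Δ}(ρ) := log₂ min{λ ≥ 0 : ρ ≤ λΔ(ρ)}` is monotone under
dephasing-covariant incoherent operations: if `Λ` is CPTP and `Λ∘Δ = Δ∘Λ`, then
`C_{max,Δ}(Λ(ρ)) ≤ C_{max,Δ}(ρ)` for every density operator `ρ`. -/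
theorem cmax_delta_monotone_DIO (d : ℕ)
    (Λ : Matrix (Fin d) (Fin d) ℂ →ₗ[ℂ] Matrix (Fin d) (Fin d) ℂ)
    (hCP : IsCP d d Λ) (hTP : IsTP d d Λ)
    (hcov : ∀ X : Matrix (Fin d) (Fin d) ℂ, Λ (deph X) = deph (Λ X))
    (ρ : Matrix (Fin d) (Fin d) ℂ) (hρ : ρ.PosSemidef) (hρtr : ρ.trace = 1) :
    Real.logb 2
        (sInf {lam : ℝ | 0 ≤ lam ∧ ((lam : ℂ) • deph (Λ ρ) - Λ ρ).PosSemidef}) ≤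
      Real.logb 2
        (sInf {lam : ℝ | 0 ≤ lam ∧ ((lam : ℂ) • deph ρ - ρ).PosSemidef}) := by
  set S1 : Set ℝ := {lam : ℝ | 0 ≤ lam ∧ ((lam : ℂ) • deph (Λ ρ) - Λ ρ).PosSemidef} with hS1
  set S2 : Set ℝ := {lam : ℝ | 0 ≤ lam ∧ ((lam : ℂ) • deph ρ - ρ).PosSemidef} with hS2
  have hΛtr : (Λ ρ).trace = 1 := by rw [hTP, hρtr]
  have hsub : S2 ⊆ S1 := by
    rintro lam ⟨h0, hpsd⟩
    refine ⟨h0, ?_⟩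
    have := cp_pos hCP hpsd
    rwa [map_sub, _root_.map_smul, hcov] at this
  have hne2 : S2.Nonempty := by
    refine ⟨(d : ℝ), Nat.cast_nonneg _, ?_⟩
    have := psd_card_smul_deph_sub hρ
    simpa using this
  have hne1 : S1.Nonempty := hne2.mono hsub
  have hbdd : BddBelow S1 := ⟨0, fun x hx => hx.1⟩
  have hle : sInf S1 ≤ sInf S2 := csInf_le_csInf hbdd hne2 hsub
  have h1 : (1 : ℝ) ≤ sInf S1 :=
    le_csInf hne1 fun b hb => one_le_of_mem hΛtr hb.2
  exact Real.logb_le_logb_of_le one_lt_two (by linarith) hle
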